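/- Let η > 0 and k ≥ 1 be an integer. Let Q and Q_0 be functions on state-action pairs with ‖Q_0‖ ≤ V_max, and let π be the soft-max policy associated with k Q + Q_0, i.e. π(a|x) = exp(η(k Q(x,a) + Q_0(x,a))) / Σ_{a'} exp(η(k Q(x,a') + Q_0(x,a'))). Then ‖k T Q + T Q_0 − k T^π Q − T^π Q_0‖ ≤ γ(2 V_max + log(L)/η). -/

import Mathlib

open Finset Real Filter

variable {X A : Type*}

/-- `(πQ)(x) = Σ_a π(a|x) Q(x,a)`. -/
noncomputable def polApply [Fintype A] (pol : X → A → ℝ) (Q : X → A → ℝ) : X → ℝ :=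
  fun x => ∑ a, pol x a * Q x a

/-- Bellman operator `T^π`. -/
noncomputable def bellman [Fintype X] [Fintype A]
    (P : X → A → X → ℝ) (r : X → A → ℝ) (γ : ℝ) (pol : X → A → ℝ)
    (Q : X → A → ℝ) : X → A → ℝ :=
  fun x a => r x a + γ * ∑ x', ∑ a', P x a x' * pol x' a' * Q x' a'

/-- Bellman optimality operator `T`. -/
noncomputable def bellmanOpt [Fintype X] [Fintype A] [Nonempty A]
    (P : X → A → X → ℝ) (r : X → A → ℝ) (γ : ℝ) (Q : X → A → ℝ) : X → A → ℝ :=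
  fun x a => r x a + γ * ∑ x', P x a x' * (Finset.univ.sup' Finset.univ_nonempty (Q x'))

/-- Soft-max policy associated with action preferences `Ψ` at inverse temperature `η`. -/
noncomputable def softmaxPol [Fintype A] (η : ℝ) (Ψ : X → A → ℝ) : X → A → ℝ :=
  fun x a => Real.exp (η * Ψ x a) / ∑ a', Real.exp (η * Ψ x a')

/-- Supremum norm over state-action pairs. -/
noncomputable def supNorm [Fintype X] [Fintype A] [Nonempty X] [Nonempty A]
    (Q : X → A → ℝ) : ℝ :=
  Finset.univ.sup' Finset.univ_nonempty (fun p : X × A => |Q p.1 p.2|)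

section aux
variable {A : Type*} [Fintype A] [Nonempty A]

lemma convComb_le_sup' (w f : A → ℝ) (hw : ∀ a, 0 ≤ w a) (hsum : ∑ a, w a = 1) :
    ∑ a, w a * f a ≤ Finset.univ.sup' Finset.univ_nonempty f := by
  calc ∑ a, w a * f a
      ≤ ∑ a, w a * Finset.univ.sup' Finset.univ_nonempty f :=
        Finset.sum_le_sum fun a _ =>
          mul_le_mul_of_nonneg_left (Finset.le_sup' f (mem_univ a)) (hw a)
    _ = Finset.univ.sup' Finset.univ_nonempty f := by rw [← Finset.sum_mul, hsum, one_mul]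

lemma softmax_sum_eq_one (η : ℝ) (Ψ : A → ℝ) :
    ∑ a, Real.exp (η * Ψ a) / (∑ a', Real.exp (η * Ψ a')) = 1 := by
  rw [← Finset.sum_div]
  exact div_self (Finset.sum_pos (fun _ _ => Real.exp_pos _) Finset.univ_nonempty).ne'

lemma softmax_inner_ge (η : ℝ) (hη : 0 < η) (Ψ : A → ℝ) :
    Finset.univ.sup' Finset.univ_nonempty Ψ - Real.log (Fintype.card A) / η ≤
      ∑ a, (Real.exp (η * Ψ a) / ∑ a', Real.exp (η * Ψ a')) * Ψ a := by
  set Z := ∑ a', Real.exp (η * Ψ a') with hZ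
  have hZpos : 0 < Z := Finset.sum_pos (fun _ _ => Real.exp_pos _) Finset.univ_nonempty
  set p : A → ℝ := fun a => Real.exp (η * Ψ a) / Z with hp
  have hppos : ∀ a, 0 < p a := fun a => div_pos (Real.exp_pos _) hZpos
  have hpsum : ∑ a, p a = 1 := softmax_sum_eq_one η Ψ
  have hlogp : ∀ a, Real.log (p a) = η * Ψ a - Real.log Z := fun a => by
    rw [hp]
    simp only
    rw [Real.log_div (Real.exp_pos _).ne' hZpos.ne', Real.log_exp]
  have hLpos : (0:ℝ) < Fintype.card A := by exact_mod_cast Fintype.card_pos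
  set M := Finset.univ.sup' Finset.univ_nonempty Ψ with hM
  have hZge : Real.exp (η * M) ≤ Z := by
    obtain ⟨a₀, -, ha₀⟩ := Finset.exists_mem_eq_sup' Finset.univ_nonempty Ψ
    rw [hM, ha₀, hZ]
    exact Finset.single_le_sum (f := fun a => Real.exp (η * Ψ a))
      (fun a _ => (Real.exp_pos _).le) (mem_univ a₀)
  have hlogZ : η * M ≤ Real.log Z := by
    have := Real.log_le_log (Real.exp_pos _) hZge
    rwa [Real.log_exp] at this
  have key : ∑ a, p a * Real.log (1 / (Fintype.card A * p a)) ≤ 0 := by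
    calc ∑ a, p a * Real.log (1 / (Fintype.card A * p a))
        ≤ ∑ a, p a * (1 / (Fintype.card A * p a) - 1) :=
          Finset.sum_le_sum fun a _ =>
            mul_le_mul_of_nonneg_left
              (Real.log_le_sub_one_of_pos (by positivity)) (hppos a).le
      _ = ∑ a, (1 / (Fintype.card A : ℝ) - p a) := by
          apply Finset.sum_congr rfl; intro a _
          have := (hppos a).ne'
          field_simp
      _ = 0 := by
          rw [Finset.sum_sub_distrib, hpsum, Finset.sum_const, card_univ,
            nsmul_eq_mul]
          field_simp
          ring
  have key2 : Real.log Z - Real.log (Fintype.card A) ≤ η * ∑ a, p a * Ψ a := by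
    have expand : ∑ a, p a * Real.log (1 / (Fintype.card A * p a)) =
        Real.log Z - Real.log (Fintype.card A) - η * ∑ a, p a * Ψ a := by
      have : ∀ a, p a * Real.log (1 / (Fintype.card A * p a)) =
          p a * (Real.log Z - Real.log (Fintype.card A)) - η * (p a * Ψ a) := by
        intro a
        rw [one_div, Real.log_inv, Real.log_mul hLpos.ne' (hppos a).ne', hlogp a]
        ring
      rw [Finset.sum_congr rfl fun a _ => this a]
      rw [Finset.sum_sub_distrib, ← Finset.sum_mul, hpsum, one_mul, ← Finset.mul_sum]
    rw [expand] at key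
    linarith
  have hmul : η * (M - Real.log (Fintype.card A) / η) ≤ η * ∑ a, p a * Ψ a := by
    have h1 : η * (M - Real.log (Fintype.card A) / η) =
        η * M - Real.log (Fintype.card A) := by
      field_simp
    rw [h1]
    linarith
  exact le_of_mul_le_mul_left hmul hη

end aux

/-- Lemma 6 of the paper: bound on the difference between applying the Bellman
optimality operator and the Bellman operator of the soft-max policy associated with
`k Q + Q_0` to `k Q + Q_0`. -/
theorem soft_bellman_difference_bound
    {X A : Type*} [Fintype X] [Fintype A] [Nonempty X] [Nonempty A]
    (P : X → A → X → ℝ) (hP0 : ∀ x a x', 0 ≤ P x a x') (hP1 : ∀ x a, ∑ x', P x a x' = 1)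
    (r : X → A → ℝ) (Rmax : ℝ) (hR : 0 < Rmax) (hr : ∀ x a, |r x a| ≤ Rmax)
    (γ : ℝ) (hγ0 : 0 ≤ γ) (hγ1 : γ < 1)
    (Vmax : ℝ) (hV : Vmax = Rmax / (1 - γ))
    (η : ℝ) (hη : 0 < η)
    (k : ℕ) (hk : 1 ≤ k)
    (Q Q₀ : X → A → ℝ) (hQ₀ : supNorm Q₀ ≤ Vmax)
    (pol : X → A → ℝ)
    (hpol : pol = softmaxPol η (fun x a => (k : ℝ) * Q x a + Q₀ x a)) :
    supNorm (fun x a =>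
        (k : ℝ) * bellmanOpt P r γ Q x a + bellmanOpt P r γ Q₀ x a -
          (k : ℝ) * bellman P r γ pol Q x a - bellman P r γ pol Q₀ x a) ≤
      γ * (2 * Vmax + Real.log (Fintype.card A) / η) := by
  subst hpol
  have hVmax0 : 0 ≤ Vmax := by
    rw [hV]
    have h1γ : 0 < 1 - γ := by linarith
    positivity
  have hlogL : 0 ≤ Real.log (Fintype.card A) := by
    apply Real.log_nonneg
    exact_mod_cast Fintype.card_pos
  have hQ₀b : ∀ x a, |Q₀ x a| ≤ Vmax := fun x a =>
    le_trans (Finset.le_sup' (f := fun p : X × A => |Q₀ p.1 p.2|) (Finset.mem_univ (x, a))) hQ₀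
  set B := 2 * Vmax + Real.log (Fintype.card A) / η with hB
  set pol := softmaxPol η (fun x a => (k : ℝ) * Q x a + Q₀ x a) with hpoldef
  set M : X → ℝ := fun x' =>
    (k : ℝ) * Finset.univ.sup' Finset.univ_nonempty (Q x') +
      Finset.univ.sup' Finset.univ_nonempty (Q₀ x') -
      ∑ a', pol x' a' * ((k : ℝ) * Q x' a' + Q₀ x' a') with hMdef
  have hk0 : (0:ℝ) ≤ (k:ℝ) := Nat.cast_nonneg k
  -- per-state bound on M
  have hMbound : ∀ x', |M x'| ≤ B := by
    intro x'
    set f : A → ℝ := fun a => (k : ℝ) * Q x' a + Q₀ x' a with hf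
    have hpolform : ∀ a, pol x' a = Real.exp (η * f a) / ∑ a', Real.exp (η * f a') := by
      intro a; rw [hpoldef]; simp only [softmaxPol, hf]
    have hS : ∑ a', pol x' a' * ((k : ℝ) * Q x' a' + Q₀ x' a') = ∑ a,
        (Real.exp (η * f a) / ∑ a', Real.exp (η * f a')) * f a := by
      exact Finset.sum_congr rfl fun a _ => by rw [hpolform a, hf]
    set S := ∑ a, (Real.exp (η * f a) / ∑ a', Real.exp (η * f a')) * f a with hSdef
    have hwpos : ∀ a, 0 ≤ Real.exp (η * f a) / ∑ a', Real.exp (η * f a') := fun a =>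
      div_nonneg (Real.exp_pos _).le
        (Finset.sum_pos (fun _ _ => Real.exp_pos _) Finset.univ_nonempty).le
    have hS_le : S ≤ Finset.univ.sup' Finset.univ_nonempty f :=
      convComb_le_sup' _ f hwpos (softmax_sum_eq_one η f)
    have hS_ge : Finset.univ.sup' Finset.univ_nonempty f -
        Real.log (Fintype.card A) / η ≤ S := softmax_inner_ge η hη f
    set sQ := Finset.univ.sup' Finset.univ_nonempty (Q x') with hsQ
    set sQ₀ := Finset.univ.sup' Finset.univ_nonempty (Q₀ x') with hsQ₀
    have hsupf_le : Finset.univ.sup' Finset.univ_nonempty f ≤ (k : ℝ) * sQ + sQ₀ := by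
      apply Finset.sup'_le
      intro a _
      have h1 : Q x' a ≤ sQ := Finset.le_sup' (Q x') (Finset.mem_univ a)
      have h2 : Q₀ x' a ≤ sQ₀ := Finset.le_sup' (Q₀ x') (Finset.mem_univ a)
      have := mul_le_mul_of_nonneg_left h1 hk0
      simp only [hf]
      linarith
    have hsupf_ge : (k : ℝ) * sQ - Vmax ≤ Finset.univ.sup' Finset.univ_nonempty f := by
      obtain ⟨a₀, -, ha₀⟩ := Finset.exists_mem_eq_sup' Finset.univ_nonempty (Q x')
      have h1 : f a₀ ≤ Finset.univ.sup' Finset.univ_nonempty f :=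
        Finset.le_sup' f (Finset.mem_univ a₀)
      have h2 : -Vmax ≤ Q₀ x' a₀ := by
        have := hQ₀b x' a₀
        have := neg_abs_le (Q₀ x' a₀)
        linarith
      have h3 : f a₀ = (k : ℝ) * sQ + Q₀ x' a₀ := by rw [hf, hsQ, ha₀]
      linarith
    have hsQ₀_le : sQ₀ ≤ Vmax := by
      apply Finset.sup'_le
      intro a _
      exact le_trans (le_abs_self _) (hQ₀b x' a)
    rw [hMdef]
    simp only
    rw [hS]
    rw [abs_le]
    constructor
    · have : S ≤ (k : ℝ) * sQ + sQ₀ := le_trans hS_le hsupf_le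
      have hB0 : 0 ≤ B := by
        rw [hB]
        have : 0 ≤ Real.log (Fintype.card A) / η := div_nonneg hlogL hη.le
        linarith
      linarith
    · have : (k : ℝ) * sQ - Vmax - Real.log (Fintype.card A) / η ≤ S := by linarith
      rw [hB]
      linarith
  -- main estimate
  rw [supNorm]
  apply Finset.sup'_le
  rintro ⟨x, a⟩ -
  simp only [bellman, bellmanOpt]
  have hsum : (k : ℝ) * (∑ x', P x a x' * Finset.univ.sup' Finset.univ_nonempty (Q x')) +
      (∑ x', P x a x' * Finset.univ.sup' Finset.univ_nonempty (Q₀ x')) -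
      (k : ℝ) * (∑ x', ∑ a', P x a x' * pol x' a' * Q x' a') -
      (∑ x', ∑ a', P x a x' * pol x' a' * Q₀ x' a') = ∑ x', P x a x' * M x' := by
    rw [Finset.mul_sum, Finset.mul_sum, ← Finset.sum_add_distrib, ← Finset.sum_sub_distrib,
      ← Finset.sum_sub_distrib]
    refine Finset.sum_congr rfl fun x' _ => ?_
    have h2 : P x a x' * ∑ a', pol x' a' * ((k : ℝ) * Q x' a' + Q₀ x' a') =
        (k : ℝ) * ∑ a', P x a x' * pol x' a' * Q x' a' +
          ∑ a', P x a x' * pol x' a' * Q₀ x' a' := by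
      rw [Finset.mul_sum, Finset.mul_sum, ← Finset.sum_add_distrib]
      exact Finset.sum_congr rfl fun a' _ => by ring
    rw [hMdef]
    simp only
    linear_combination h2
  have hexpr : (k : ℝ) * (r x a + γ * ∑ x', P x a x' *
        Finset.univ.sup' Finset.univ_nonempty (Q x')) +
      (r x a + γ * ∑ x', P x a x' * Finset.univ.sup' Finset.univ_nonempty (Q₀ x')) -
      (k : ℝ) * (r x a + γ * ∑ x', ∑ a', P x a x' * pol x' a' * Q x' a') -
      (r x a + γ * ∑ x', ∑ a', P x a x' * pol x' a' * Q₀ x' a') =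
      γ * ∑ x', P x a x' * M x' := by
    rw [← hsum]; ring
  rw [hexpr, abs_mul, abs_of_nonneg hγ0]
  apply mul_le_mul_of_nonneg_left _ hγ0
  calc |∑ x', P x a x' * M x'| ≤ ∑ x', |P x a x' * M x'| :=
        Finset.abs_sum_le_sum_abs _ _
    _ = ∑ x', P x a x' * |M x'| := Finset.sum_congr rfl fun x' _ => by
        rw [abs_mul, abs_of_nonneg (hP0 x a x')]
    _ ≤ ∑ x', P x a x' * B := Finset.sum_le_sum fun x' _ =>
        mul_le_mul_of_nonneg_left (hMbound x') (hP0 x a x')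
    _ = B := by rw [← Finset.sum_mul, hP1, one_mul]
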